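/- Let F ⊆ C^m_{κ,φ}(cl(A)). Then F is compact if and only if Γ_p(F) is compact in C(X, ℝ) for every multi-index p with |p| ≤ m. -/

import Mathlib

open Filter Topology MeasureTheory

/-- First-order partial derivative in the `i`-th coordinate direction. -/
noncomputable def pd {n : ℕ} (i : Fin n) (f : (Fin n → ℝ) → ℝ) : (Fin n → ℝ) → ℝ :=
  fun x => fderiv ℝ f x (Pi.single i 1)

/-- The partial derivative `∂_p` associated to a multi-index `p`. -/
noncomputable def mpd {n : ℕ} (p : Fin n → ℕ) (f : (Fin n → ℝ) → ℝ) : (Fin n → ℝ) → ℝ :=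
  (List.finRange n).foldr (fun i g => (pd i)^[p i] g) f

/-- The order `|p|` of a multi-index. -/
def deg {n : ℕ} (p : Fin n → ℕ) : ℕ := ∑ i, p i

/-- `LimAlong S κ g x z`: the limit of `g` along the compactification `κ` (of the set `S`)
at the point `x` is `z`. -/
def LimAlong {α X : Type*} [TopologicalSpace X] (S : Set α) (κ : α → X)
    (g : α → ℝ) (x : X) (z : ℝ) : Prop :=
  Tendsto g (Filter.comap κ (𝓝 x) ⊓ Filter.principal S) (𝓝 z)

/-- Membership in the space `C^m_{κ,φ}(cl A)`: `f` is `C^m` and each weighted derivative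
`∂_p(f/φ)`, `|p| ≤ m`, has a limit along `κ` at every point at infinity. -/
def MemCm {n : ℕ} (m : ℕ) (A : Set (Fin n → ℝ)) {X : Type*} [TopologicalSpace X]
    (κ : (Fin n → ℝ) → X) (φ : (Fin n → ℝ) → ℝ) (f : (Fin n → ℝ) → ℝ) : Prop :=
  ContDiff ℝ (m : ℕ∞) f ∧ ∀ p : Fin n → ℕ, deg p ≤ m →
    ∀ x : X, x ∉ κ '' closure A → ∃ z : ℝ,
      LimAlong (closure A) κ (fun y => mpd p (fun w => f w / φ w) y) x z

/-- The norm `‖f‖_{κ,φ} = max_{|p| ≤ m} ‖∂_p(f/φ)‖_∞` (sup over `cl A`). -/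
noncomputable def normK {n : ℕ} (m : ℕ) (A : Set (Fin n → ℝ)) (φ : (Fin n → ℝ) → ℝ)
    (f : (Fin n → ℝ) → ℝ) : ℝ :=
  ⨆ p : {p : Fin n → ℕ // deg p ≤ m}, ⨆ t : closure A, |mpd p.1 (fun w => f w / φ w) t.1|

section aux
variable {n : ℕ}

lemma pd_contDiff {k : ℕ} {g : (Fin n → ℝ) → ℝ} (i : Fin n)
    (hg : ContDiff ℝ ((k + 1 : ℕ) : ℕ∞) g) : ContDiff ℝ (k : ℕ∞) (pd i g) := by
  have h1 : ContDiff ℝ (k : ℕ∞) (fderiv ℝ g) :=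
    hg.fderiv_right (by exact_mod_cast le_refl (k+1))
  exact h1.clm_apply contDiff_const

lemma pd_iter_contDiff {k : ℕ} {j : ℕ} {g : (Fin n → ℝ) → ℝ} (i : Fin n)
    (hg : ContDiff ℝ ((k + j : ℕ) : ℕ∞) g) : ContDiff ℝ (k : ℕ∞) ((pd i)^[j] g) := by
  induction j generalizing g with
  | zero => simpa using hg
  | succ j ih =>
    rw [Function.iterate_succ_apply]
    refine ih (pd_contDiff (k := k + j) i ?_)
    rw [show k + j + 1 = k + (j + 1) by omega]
    exact hg

lemma foldr_contDiff (p : Fin n → ℕ) :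
    ∀ (L : List (Fin n)) {k : ℕ} {g : (Fin n → ℝ) → ℝ},
      ContDiff ℝ ((k + (L.map p).sum : ℕ) : ℕ∞) g →
      ContDiff ℝ (k : ℕ∞) (L.foldr (fun i h => (pd i)^[p i] h) g)
  | [], k, g, hg => by simpa using hg
  | i :: L, k, g, hg => by
    simp only [List.foldr_cons]
    refine pd_iter_contDiff i (foldr_contDiff p L (k := k + p i) ?_)
    rw [show k + p i + (L.map p).sum = k + ((i :: L).map p).sum by simp [List.sum_cons]; omega]
    exact hg

lemma mpd_contDiff {k : ℕ} {p : Fin n → ℕ} {g : (Fin n → ℝ) → ℝ}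
    (hg : ContDiff ℝ ((k + deg p : ℕ) : ℕ∞) g) : ContDiff ℝ (k : ℕ∞) (mpd p g) := by
  refine foldr_contDiff p (List.finRange n) ?_
  rwa [deg, Fin.sum_univ_def] at hg

lemma pd_sub {a b : (Fin n → ℝ) → ℝ} (i : Fin n)
    (ha : Differentiable ℝ a) (hb : Differentiable ℝ b) :
    pd i (fun w => a w - b w) = fun x => pd i a x - pd i b x := by
  funext x
  have : fderiv ℝ (fun w => a w - b w) x = fderiv ℝ a x - fderiv ℝ b x :=
    fderiv_sub (ha x) (hb x)
  simp [pd, this]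

lemma pd_iter_sub {j : ℕ} {a b : (Fin n → ℝ) → ℝ} (i : Fin n)
    (ha : ContDiff ℝ (j : ℕ∞) a) (hb : ContDiff ℝ (j : ℕ∞) b) :
    (pd i)^[j] (fun w => a w - b w) = fun x => (pd i)^[j] a x - (pd i)^[j] b x := by
  induction j generalizing a b with
  | zero => rfl
  | succ j ih =>
    have ha1 : Differentiable ℝ a := ha.differentiable (by simp)
    have hb1 : Differentiable ℝ b := hb.differentiable (by simp)
    rw [Function.iterate_succ_apply, Function.iterate_succ_apply, Function.iterate_succ_apply]
    rw [pd_sub i ha1 hb1]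
    exact ih (pd_contDiff (k := j) i (by exact_mod_cast ha)) (pd_contDiff (k := j) i (by exact_mod_cast hb))

lemma foldr_sub (p : Fin n → ℕ) :
    ∀ (L : List (Fin n)) {a b : (Fin n → ℝ) → ℝ},
      ContDiff ℝ (((L.map p).sum : ℕ) : ℕ∞) a →
      ContDiff ℝ (((L.map p).sum : ℕ) : ℕ∞) b →
      L.foldr (fun i h => (pd i)^[p i] h) (fun w => a w - b w) =
        fun x => L.foldr (fun i h => (pd i)^[p i] h) a x -
          L.foldr (fun i h => (pd i)^[p i] h) b x
  | [], a, b, _, _ => rfl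
  | i :: L, a, b, ha, hb => by
    simp only [List.foldr_cons]
    have hs : ((L.map p).sum : ℕ) ≤ ((i :: L).map p).sum := by simp [List.sum_cons]
    have ha' : ContDiff ℝ (((L.map p).sum : ℕ) : ℕ∞) a := ha.of_le (by exact_mod_cast hs)
    have hb' : ContDiff ℝ (((L.map p).sum : ℕ) : ℕ∞) b := hb.of_le (by exact_mod_cast hs)
    rw [foldr_sub p L ha' hb']
    refine pd_iter_sub i ?_ ?_
    · refine foldr_contDiff p L (k := p i) ?_
      rw [show p i + (L.map p).sum = ((i :: L).map p).sum by simp [List.sum_cons]]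
      exact ha
    · refine foldr_contDiff p L (k := p i) ?_
      rw [show p i + (L.map p).sum = ((i :: L).map p).sum by simp [List.sum_cons]]
      exact hb

lemma mpd_sub {p : Fin n → ℕ} {a b : (Fin n → ℝ) → ℝ}
    (ha : ContDiff ℝ ((deg p : ℕ) : ℕ∞) a) (hb : ContDiff ℝ ((deg p : ℕ) : ℕ∞) b) :
    mpd p (fun w => a w - b w) = fun x => mpd p a x - mpd p b x := by
  refine foldr_sub p (List.finRange n) ?_ ?_ <;>
    [rwa [deg, Fin.sum_univ_def] at ha; rwa [deg, Fin.sum_univ_def] at hb]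

lemma foldr_congr {p q : Fin n → ℕ} :
    ∀ (L : List (Fin n)) (g : (Fin n → ℝ) → ℝ), (∀ j ∈ L, q j = p j) →
      L.foldr (fun i h => (pd i)^[q i] h) g = L.foldr (fun i h => (pd i)^[p i] h) g
  | [], g, _ => rfl
  | i :: L, g, h => by
    simp only [List.foldr_cons]
    rw [foldr_congr L g (fun j hj => h j (List.mem_cons_of_mem i hj)),
      h i (List.mem_cons_self)]

lemma foldr_zero {p : Fin n → ℕ} :
    ∀ (L : List (Fin n)) (g : (Fin n → ℝ) → ℝ), (∀ j ∈ L, p j = 0) →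
      L.foldr (fun i h => (pd i)^[p i] h) g = g
  | [], g, _ => rfl
  | i :: L, g, h => by
    simp only [List.foldr_cons]
    rw [foldr_zero L g (fun j hj => h j (List.mem_cons_of_mem i hj)), h i (List.mem_cons_self)]
    simp

lemma mpd_zero (g : (Fin n → ℝ) → ℝ) : mpd (fun _ => 0) g = g :=
  foldr_zero _ g (fun _ _ => rfl)

lemma mpd_zero' {p : Fin n → ℕ} (hp : deg p = 0) (g : (Fin n → ℝ) → ℝ) : mpd p g = g := by
  refine foldr_zero _ g (fun j _ => ?_)
  have := Finset.sum_eq_zero_iff.mp hp j (Finset.mem_univ j)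
  exact this

lemma foldr_update {p : Fin n → ℕ} {i : Fin n} (hz : ∀ j, j < i → p j = 0) :
    ∀ (L : List (Fin n)), L.Pairwise (· < ·) → i ∈ L → ∀ (g : (Fin n → ℝ) → ℝ),
      L.foldr (fun j h => (pd j)^[Function.update p i (p i + 1) j] h) g =
        pd i (L.foldr (fun j h => (pd j)^[p j] h) g)
  | [], _, hi, _ => absurd hi List.not_mem_nil
  | a :: L, hs, hi, g => by
    have hsL : L.Pairwise (· < ·) := hs.of_cons
    have ha : ∀ j ∈ L, a < j := fun j hj => (List.pairwise_cons.mp hs).1 j hj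
    simp only [List.foldr_cons]
    by_cases hai : i = a
    · subst hai
      have hiL : i ∉ L := fun hmem => lt_irrefl i (ha i hmem)
      have : L.foldr (fun j h => (pd j)^[Function.update p i (p i + 1) j] h) g
          = L.foldr (fun j h => (pd j)^[p j] h) g := by
        refine foldr_congr L g (fun j hj => ?_)
        refine Function.update_of_ne (fun hji => hiL ?_) _ p
        rwa [hji] at hj
      rw [this, Function.update_self, Function.iterate_succ_apply']
    · have hiL : i ∈ L := (List.mem_cons.mp hi).resolve_left hai
      have hai' : a < i := ha i hiL
      have hpa : p a = 0 := hz a hai'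
      have hqa : Function.update p i (p i + 1) a = 0 := by
        rw [Function.update_of_ne (fun h => hai h.symm)]; exact hpa
      rw [hqa, hpa]
      simp only [Function.iterate_zero, id]
      exact foldr_update hz L hsL hiL g

lemma mpd_update {p : Fin n → ℕ} {i : Fin n} (hz : ∀ j, j < i → p j = 0)
    (g : (Fin n → ℝ) → ℝ) :
    mpd (Function.update p i (p i + 1)) g = pd i (mpd p g) :=
  foldr_update hz (List.finRange n) (List.pairwise_lt_finRange n) (List.mem_finRange i) g

end aux

lemma finiteP (n m : ℕ) : Finite {p : Fin n → ℕ // deg p ≤ m} := by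
  have key : ∀ p : {p : Fin n → ℕ // deg p ≤ m}, ∀ i, p.1 i ≤ m := fun p i =>
    le_trans (Finset.single_le_sum (fun _ _ => Nat.zero_le _) (Finset.mem_univ i)) p.2
  refine Finite.of_injective
    (fun p => (fun i => (⟨p.1 i, Nat.lt_succ_of_le (key p i)⟩ : Fin (m+1)))) ?_
  intro p q h
  refine Subtype.ext (funext fun i => ?_)
  have := congrFun h i
  simpa [Fin.mk.injEq] using this

/-- a set `F ⊆ C^m_{κ,φ}(cl A)` is compact (equivalently, sequentially compact
for the metric of the norm `‖·‖_{κ,φ}`) iff `Γ_p(F)` is compact in `C(X,ℝ)` for every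
multi-index `p` with `|p| ≤ m`. -/
theorem stmt_11 {n m : ℕ} (A : Set (Fin n → ℝ)) (hAo : IsOpen A) (hAc : IsConnected A)
    (hAu : ¬ Bornology.IsBounded A) {X : Type*} [MetricSpace X] [CompactSpace X]
    (κ : (Fin n → ℝ) → X) (hκc : ContinuousOn κ (closure A))
    (hκd : Dense (κ '' closure A))
    (hκe : Topology.IsEmbedding ((closure A).restrict κ))
    (φ : (Fin n → ℝ) → ℝ) (hφs : ContDiff ℝ (m : ℕ∞) φ) (hφp : ∀ x, 0 < φ x)
    -- `Γ p f ∈ C(X,ℝ)` is the unique continuous extension of `∂_p(f/φ)` through `κ`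
    (Γ : (Fin n → ℕ) → ((Fin n → ℝ) → ℝ) → C(X, ℝ))
    (hΓ : ∀ (p : Fin n → ℕ), deg p ≤ m → ∀ f : (Fin n → ℝ) → ℝ, MemCm m A κ φ f →
      ∀ y ∈ closure A, Γ p f (κ y) = mpd p (fun w => f w / φ w) y)
    (F : Set ((Fin n → ℝ) → ℝ)) (hF : ∀ f ∈ F, MemCm m A κ φ f) :
    -- `F` compact (sequential compactness in the `‖·‖_{κ,φ}` metric) iff all `Γ_p(F)` compact
    ((∀ u : ℕ → (Fin n → ℝ) → ℝ, (∀ k, u k ∈ F) →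
        ∃ f ∈ F, ∃ ψ : ℕ → ℕ, StrictMono ψ ∧
          Tendsto (fun k => normK m A φ (u (ψ k) - f)) atTop (𝓝 0)) ↔
      (∀ p : Fin n → ℕ, deg p ≤ m → IsCompact (Γ p '' F))) := by
  classical
  have hAne : (closure A).Nonempty := hAc.nonempty.mono subset_closure
  haveI : Nonempty (closure A) := hAne.to_subtype
  haveI hPfin : Finite {p : Fin n → ℕ // deg p ≤ m} := finiteP n m
  haveI hPne : Nonempty {p : Fin n → ℕ // deg p ≤ m} := ⟨⟨fun _ => 0, by simp [deg]⟩⟩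
  have hQc : ∀ f, MemCm m A κ φ f → ContDiff ℝ (m : ℕ∞) (fun w => f w / φ w) :=
    fun f hf => hf.1.div hφs fun x => (hφp x).ne'
  -- key pointwise identity
  have key : ∀ (p : Fin n → ℕ), deg p ≤ m → ∀ u f, MemCm m A κ φ u → MemCm m A κ φ f →
      ∀ y ∈ closure A, mpd p (fun w => (u - f) w / φ w) y = Γ p u (κ y) - Γ p f (κ y) := by
    intro p hp u f hu hf y hy
    have hsub : (fun w => (u - f) w / φ w)
        = (fun w => (fun v => u v / φ v) w - (fun v => f v / φ v) w) := by
      funext w; simp [Pi.sub_apply, sub_div]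
    have ha : ContDiff ℝ ((deg p : ℕ) : ℕ∞) (fun v => u v / φ v) :=
      (hQc u hu).of_le (by exact_mod_cast hp)
    have hb : ContDiff ℝ ((deg p : ℕ) : ℕ∞) (fun v => f v / φ v) :=
      (hQc f hf).of_le (by exact_mod_cast hp)
    rw [hsub, mpd_sub ha hb, hΓ p hp u hu y hy, hΓ p hp f hf y hy]
  -- bounds
  have hBddInner : ∀ u f, MemCm m A κ φ u → MemCm m A κ φ f →
      ∀ p : {p : Fin n → ℕ // deg p ≤ m},
      BddAbove (Set.range fun t : closure A =>
        |mpd p.1 (fun w => (u - f) w / φ w) t.1|) := by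
    intro u f hu hf p
    refine ⟨‖Γ p.1 u - Γ p.1 f‖, ?_⟩
    rintro r ⟨t, rfl⟩
    dsimp only
    rw [key p.1 p.2 u f hu hf t.1 t.2]
    simpa using (Γ p.1 u - Γ p.1 f).norm_coe_le_norm (κ t.1)
  have hBddOuter : ∀ u f : (Fin n → ℝ) → ℝ, BddAbove (Set.range fun p : {p : Fin n → ℕ // deg p ≤ m} =>
      ⨆ t : closure A, |mpd p.1 (fun w => (u - f) w / φ w) t.1|) :=
    fun u f => Set.Finite.bddAbove (Set.finite_range _)
  have hnormK_le : ∀ u f, MemCm m A κ φ u → MemCm m A κ φ f → ∀ c : ℝ,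
      (∀ p : {p : Fin n → ℕ // deg p ≤ m}, ‖Γ p.1 u - Γ p.1 f‖ ≤ c) →
      normK m A φ (u - f) ≤ c := by
    intro u f hu hf c hc
    simp only [normK]
    refine ciSup_le fun p => ciSup_le fun t => ?_
    rw [key p.1 p.2 u f hu hf t.1 t.2]
    refine le_trans ?_ (hc p)
    simpa using (Γ p.1 u - Γ p.1 f).norm_coe_le_norm (κ t.1)
  have hnormK_nonneg : ∀ u f, MemCm m A κ φ u → MemCm m A κ φ f →
      0 ≤ normK m A φ (u - f) := by
    intro u f hu hf
    obtain ⟨t⟩ := (inferInstance : Nonempty (closure A))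
    obtain ⟨p⟩ := hPne
    simp only [normK]
    refine le_trans (abs_nonneg (mpd p.1 (fun w => (u - f) w / φ w) t.1)) ?_
    exact le_trans (le_ciSup (hBddInner u f hu hf p) t) (le_ciSup (hBddOuter u f) p)
  have hnorm_le_normK : ∀ (p : Fin n → ℕ) (hp : deg p ≤ m) u f,
      MemCm m A κ φ u → MemCm m A κ φ f →
      ‖Γ p u - Γ p f‖ ≤ normK m A φ (u - f) := by
    intro p hp u f hu hf
    refine (ContinuousMap.norm_le _ (hnormK_nonneg u f hu hf)).mpr ?_
    intro x
    have hcl : IsClosed {x : X | ‖(Γ p u - Γ p f) x‖ ≤ normK m A φ (u - f)} :=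
      isClosed_le (Continuous.norm (Γ p u - Γ p f).continuous) continuous_const
    have hsub : κ '' closure A ⊆ {x : X | ‖(Γ p u - Γ p f) x‖ ≤ normK m A φ (u - f)} := by
      rintro _ ⟨y, hy, rfl⟩
      simp only [Set.mem_setOf_eq, ContinuousMap.sub_apply, Real.norm_eq_abs]
      rw [← key p hp u f hu hf y hy]
      simp only [normK]
      exact le_trans (le_ciSup (hBddInner u f hu hf ⟨p, hp⟩) (⟨y, hy⟩ : closure A))
        (le_ciSup (hBddOuter u f) (⟨p, hp⟩ : {p : Fin n → ℕ // deg p ≤ m}))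
    have huniv : (Set.univ : Set X)
        ⊆ {x : X | ‖(Γ p u - Γ p f) x‖ ≤ normK m A φ (u - f)} := by
      rw [← hκd.closure_eq]
      exact closure_minimal hsub hcl
    exact huniv (Set.mem_univ x)
  constructor
  · -- forward
    intro hSeq p hp
    have hseqc : IsSeqCompact (Γ p '' F) := by
      intro x hx
      simp only [Set.mem_image] at hx
      choose uu huF hux using hx
      obtain ⟨f, hfF, ψ, hψ, hten⟩ := hSeq uu huF
      refine ⟨Γ p f, ⟨f, hfF, rfl⟩, ψ, hψ, ?_⟩
      rw [tendsto_iff_dist_tendsto_zero]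
      refine squeeze_zero (fun k => dist_nonneg) (fun k => ?_) hten
      have hd : dist ((x ∘ ψ) k) (Γ p f) = ‖Γ p (uu (ψ k)) - Γ p f‖ := by
        rw [Function.comp_apply, ← hux (ψ k), dist_eq_norm]
      rw [hd]
      exact hnorm_le_normK p hp _ f (hF _ (huF (ψ k))) (hF f hfF)
    exact hseqc.isCompact
  · -- backward
    intro hC u hu
    letI : Fintype {p : Fin n → ℕ // deg p ≤ m} := Fintype.ofFinite _
    have hVmem : ∀ k, (fun p : {p : Fin n → ℕ // deg p ≤ m} => Γ p.1 (u k))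
        ∈ Set.pi Set.univ (fun p : {p : Fin n → ℕ // deg p ≤ m} => Γ p.1 '' F) :=
      fun k p _ => ⟨u k, hu k, rfl⟩
    obtain ⟨G, hGmem, ψ, hψ, hGten⟩ :=
      (isCompact_univ_pi (fun p : {p : Fin n → ℕ // deg p ≤ m} =>
        hC p.1 p.2)).tendsto_subseq hVmem
    have hGt : ∀ p : {p : Fin n → ℕ // deg p ≤ m},
        Tendsto (fun k => Γ p.1 (u (ψ k))) atTop (𝓝 (G p)) :=
      fun p => tendsto_pi_nhds.mp hGten p
    obtain ⟨f₀, hf₀F, hf₀e⟩ := hGmem ⟨fun _ => 0, by simp [deg]⟩ (Set.mem_univ _)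
    -- base case
    have base : ∀ (p : Fin n → ℕ) (hp : deg p ≤ m), deg p = 0 → ∀ y ∈ A,
        mpd p (fun w => f₀ w / φ w) y = G ⟨p, hp⟩ (κ y) := by
      intro p hp hp0 y hy
      have hpz : p = fun _ => 0 := by
        funext j
        exact Finset.sum_eq_zero_iff.mp hp0 j (Finset.mem_univ j)
      subst hpz
      rw [mpd_zero,
        show G ⟨(fun _ => 0 : Fin n → ℕ), hp⟩ = Γ (fun _ => 0) f₀ from hf₀e.symm,
        hΓ _ hp f₀ (hF f₀ hf₀F) y (subset_closure hy), mpd_zero]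
    -- core induction
    have core : ∀ N : ℕ, ∀ (p : Fin n → ℕ) (hp : deg p ≤ m), deg p ≤ N → ∀ y ∈ A,
        mpd p (fun w => f₀ w / φ w) y = G ⟨p, hp⟩ (κ y) := by
      intro N
      induction N with
      | zero => exact fun p hp hN y hy => base p hp (Nat.le_zero.mp hN) y hy
      | succ N ih =>
        intro p hp hN y hy
        rcases Nat.eq_zero_or_pos (deg p) with hd0 | hdpos
        · exact base p hp hd0 y hy
        have hex : ∃ i, p i ≠ 0 := by
          by_contra hcon
          push_neg at hcon
          have : deg p = 0 := Finset.sum_eq_zero fun j _ => hcon j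
          omega
        have hTne : (Finset.univ.filter (fun j => p j ≠ 0)).Nonempty := by
          obtain ⟨i, hi⟩ := hex; exact ⟨i, by simp [hi]⟩
        set i := (Finset.univ.filter (fun j => p j ≠ 0)).min' hTne with hi
        have hpi : p i ≠ 0 := by
          have := (Finset.univ.filter (fun j => p j ≠ 0)).min'_mem hTne
          simpa using this
        have hpi1 : 1 ≤ p i := Nat.one_le_iff_ne_zero.mpr hpi
        have hz : ∀ j, j < i → p j = 0 := by
          intro j hj
          by_contra hc
          exact absurd ((Finset.univ.filter (fun j => p j ≠ 0)).min'_le j (by simp [hc]))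
            (not_le.mpr hj)
        set p' := Function.update p i (p i - 1) with hp'def
        have hupd : Function.update p' i (p' i + 1) = p := by
          funext j
          by_cases hji : j = i
          · subst hji; simp [p', Function.update_self]; omega
          · simp [p', Function.update_of_ne hji]
        have hz' : ∀ j, j < i → p' j = 0 := by
          intro j hj
          rw [hp'def, Function.update_of_ne (ne_of_lt hj)]
          exact hz j hj
        have hdeg : deg p' + 1 = deg p := by
          rw [deg, deg, hp'def, Finset.sum_update_of_mem (Finset.mem_univ i),
            Finset.sdiff_singleton_eq_erase, ← Finset.add_sum_erase _ p (Finset.mem_univ i)]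
          omega
        have hp'm : deg p' ≤ m := by omega
        have hp'N : deg p' ≤ N := by omega
        have hrec : ∀ g : (Fin n → ℝ) → ℝ, mpd p g = pd i (mpd p' g) := by
          intro g
          conv_lhs => rw [← hupd]
          exact mpd_update hz' g
        have hsm : ∀ f, MemCm m A κ φ f →
            ContDiff ℝ ((1 : ℕ) : ℕ∞) (mpd p' (fun w => f w / φ w)) := by
          intro f hf
          refine mpd_contDiff (k := 1) ?_
          refine (hQc f hf).of_le ?_
          exact_mod_cast (by omega : 1 + deg p' ≤ m)
        obtain ⟨ε, hεpos, hball⟩ := Metric.isOpen_iff.mp hAo y hy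
        set e : Fin n → ℝ := Pi.single i 1 with he
        set δ : ℝ := ε / (‖e‖ + 1) with hδ
        have hδpos : 0 < δ := div_pos hεpos (by positivity)
        set line : ℝ → (Fin n → ℝ) := fun t => y + t • e with hline
        have hmem : ∀ t ∈ Metric.ball (0:ℝ) δ, line t ∈ A := by
          intro t ht
          apply hball
          have hdist : dist (line t) y = ‖t • e‖ := by
            rw [dist_eq_norm]; simp [line]
          rw [Metric.mem_ball, hdist, norm_smul, Real.norm_eq_abs]
          have h1 : |t| < δ := by simpa [Real.dist_eq] using ht
          have h2 : (0:ℝ) ≤ ‖e‖ := norm_nonneg e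
          calc |t| * ‖e‖ ≤ |t| * (‖e‖ + 1) := by nlinarith [abs_nonneg t]
            _ < δ * (‖e‖ + 1) := by nlinarith
            _ = ε := by rw [hδ]; field_simp
        have hlined : ∀ t : ℝ, HasDerivAt line e t := by
          intro t
          have h := ((hasDerivAt_id t).smul_const e).const_add y; rw [one_smul] at h; exact h
        have hDer : ∀ f, MemCm m A κ φ f → ∀ t : ℝ,
            HasDerivAt (fun s => mpd p' (fun w => f w / φ w) (line s))
              (mpd p (fun w => f w / φ w) (line t)) t := by
          intro f hf t
          have hd : DifferentiableAt ℝ (mpd p' (fun w => f w / φ w)) (line t) :=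
            ((hsm f hf).differentiable (by simp)).differentiableAt
          have h2 := hd.hasFDerivAt.comp_hasDerivAt t (hlined t)
          have h3 : mpd p (fun w => f w / φ w) (line t)
              = fderiv ℝ (mpd p' (fun w => f w / φ w)) (line t) e := by
            rw [hrec]; rfl
          rw [h3]
          exact h2
        have hunif : TendstoUniformlyOn
            (fun k t => mpd p (fun w => u (ψ k) w / φ w) (line t))
            (fun t => G ⟨p, hp⟩ (κ (line t))) atTop (Metric.ball (0:ℝ) δ) := by
          have h1 : TendstoUniformly (fun k x => Γ p (u (ψ k)) x) (G ⟨p, hp⟩) atTop :=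
            ContinuousMap.tendsto_iff_tendstoUniformly.mp (hGt ⟨p, hp⟩)
          have h2 := (h1.comp (fun t : ℝ => κ (line t))).tendstoUniformlyOn
            (s := Metric.ball (0:ℝ) δ)
          refine h2.congr ?_
          filter_upwards with k t ht
          exact hΓ p hp (u (ψ k)) (hF _ (hu (ψ k))) (line t) (subset_closure (hmem t ht))
        have hpt : ∀ t ∈ Metric.ball (0:ℝ) δ,
            Tendsto (fun k => mpd p' (fun w => u (ψ k) w / φ w) (line t)) atTop
              (𝓝 (mpd p' (fun w => f₀ w / φ w) (line t))) := by
          intro t ht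
          have hA' : line t ∈ A := hmem t ht
          have h1 : Tendsto (fun k => Γ p' (u (ψ k)) (κ (line t))) atTop
              (𝓝 (G ⟨p', hp'm⟩ (κ (line t)))) :=
            Tendsto.comp (continuous_eval_const (κ (line t))).continuousAt
              (hGt ⟨p', hp'm⟩)
          have h2 : (fun k => mpd p' (fun w => u (ψ k) w / φ w) (line t))
              = (fun k => Γ p' (u (ψ k)) (κ (line t))) := by
            funext k
            exact (hΓ p' hp'm (u (ψ k)) (hF _ (hu (ψ k))) (line t) (subset_closure hA')).symm
          rw [h2, ih p' hp'm hp'N (line t) hA']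
          exact h1
        have hmain := hasDerivAt_of_tendstoUniformlyOn Metric.isOpen_ball hunif
          (Filter.Eventually.of_forall fun k t ht => hDer (u (ψ k)) (hF _ (hu (ψ k))) t)
          hpt (Metric.mem_ball_self hδpos)
        have hf₀der := hDer f₀ (hF f₀ hf₀F) 0
        have huniq := hf₀der.unique hmain
        have hline0 : line 0 = y := by simp [line]
        rw [hline0] at huniq
        exact huniq
    -- identify the limits
    have hGeq : ∀ p : {p : Fin n → ℕ // deg p ≤ m}, Γ p.1 f₀ = G p := by
      intro p
      have hdense : Dense (κ '' A) := by
        have h1 : κ '' closure A ⊆ closure (κ '' A) := hκc.image_closure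
        exact (hκd.mono h1).of_closure
      refine ContinuousMap.ext fun x =>
        congrFun (Continuous.ext_on hdense (Γ p.1 f₀).continuous (G p).continuous ?_) x
      rintro _ ⟨y, hy, rfl⟩
      exact (hΓ p.1 p.2 f₀ (hF f₀ hf₀F) y (subset_closure hy)).trans
        (core (deg p.1) p.1 p.2 le_rfl y hy)
    refine ⟨f₀, hf₀F, ψ, hψ, ?_⟩
    have hsum : Tendsto (fun k => ∑ p : {p : Fin n → ℕ // deg p ≤ m},
        ‖Γ p.1 (u (ψ k)) - Γ p.1 f₀‖) atTop (𝓝 0) := by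
      have h0 : (0:ℝ) = ∑ _p : {p : Fin n → ℕ // deg p ≤ m}, (0:ℝ) := by simp
      rw [h0]
      refine tendsto_finset_sum _ fun p _ => ?_
      have h1 : Tendsto (fun k => Γ p.1 (u (ψ k))) atTop (𝓝 (Γ p.1 f₀)) := by
        rw [hGeq p]; exact hGt p
      have h2 := tendsto_iff_dist_tendsto_zero.mp h1
      refine h2.congr fun k => ?_
      rw [dist_eq_norm]
    refine squeeze_zero
      (fun k => hnormK_nonneg _ _ (hF _ (hu (ψ k))) (hF _ hf₀F)) (fun k => ?_) hsum
    refine hnormK_le _ _ (hF _ (hu (ψ k))) (hF f₀ hf₀F) _ fun p => ?_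
    exact Finset.single_le_sum
      (f := fun p : {p : Fin n → ℕ // deg p ≤ m} => ‖Γ p.1 (u (ψ k)) - Γ p.1 f₀‖)
      (fun q _ => norm_nonneg _) (Finset.mem_univ p)
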